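/- For arbitrary closed linear subspaces H₁ₐ, H₁ᵦ of a Hilbert space H₁ and H₂ₐ, H₂ᵦ of a Hilbert space H₂, one has (H₁ₐ ⊗ H₂ₐ) ∩ (H₁ᵦ ⊗ H₂ᵦ) = (H₁ₐ ∩ H₁ᵦ) ⊗ (H₂ₐ ∩ H₂ᵦ) as subspaces of H₁ ⊗ H₂. -/

import Mathlib

open RealInnerProductSpace

noncomputable section

variable {H₁ H₂ H : Type*}
  [NormedAddCommGroup H₁] [InnerProductSpace ℝ H₁] [CompleteSpace H₁]
  [NormedAddCommGroup H₂] [InnerProductSpace ℝ H₂] [CompleteSpace H₂]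
  [NormedAddCommGroup H] [InnerProductSpace ℝ H] [CompleteSpace H]

/-- For closed subspaces `K₁ ⊆ H₁`, `K₂ ⊆ H₂`, the subspace `K₁ ⊗ K₂` of `H = H₁ ⊗ H₂`:
the closed subspace generated by the elementary tensors `k₁ ⊗ k₂`, `k₁ ∈ K₁`, `k₂ ∈ K₂`;
here the tensor product structure is given by a bilinear map `T : H₁ → H₂ → H`. -/
def tensorSub (T : H₁ →L[ℝ] H₂ →L[ℝ] H) (K₁ : Submodule ℝ H₁) (K₂ : Submodule ℝ H₂) :
    Submodule ℝ H :=
  (Submodule.span ℝ {z : H | ∃ a ∈ K₁, ∃ b ∈ K₂, z = T a b}).topologicalClosure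

set_option linter.unusedSectionVars false
namespace Stmt5Aux

/-- closure of span is the least closed submodule containing the set -/
lemma closure_span_le {s : Set H} {M : Submodule ℝ H} (hM : IsClosed (M : Set H))
    (h : s ⊆ M) : (Submodule.span ℝ s).topologicalClosure ≤ M :=
  Submodule.topologicalClosure_minimal _ (Submodule.span_le.mpr h) hM

/-- an element orthogonal to the generators is orthogonal to the closed span -/
lemma mem_closure_span_orthogonal {s : Set H} {x : H} (h : ∀ z ∈ s, ⟪x, z⟫ = 0) :
    x ∈ ((Submodule.span ℝ s).topologicalClosure)ᗮ := by
  rw [Submodule.mem_orthogonal]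
  intro v hv
  have hle : (Submodule.span ℝ s).topologicalClosure ≤ (ℝ ∙ x)ᗮ :=
    closure_span_le (Submodule.isClosed_orthogonal _) (fun z hz =>
      Submodule.mem_orthogonal_singleton_iff_inner_right.mpr (h z hz))
  exact Submodule.mem_orthogonal_singleton_iff_inner_left.mp (hle hv)

variable (T : H₁ →L[ℝ] H₂ →L[ℝ] H)

def sliceL (y : H₂) : H →L[ℝ] H₁ := ContinuousLinearMap.adjoint (T.flip y)

def sliceR (a : H₁) : H →L[ℝ] H₂ := ContinuousLinearMap.adjoint (T a)

lemma sliceL_inner (y : H₂) (x : H) (c : H₁) : ⟪sliceL T y x, c⟫ = ⟪x, T c y⟫ :=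
  ContinuousLinearMap.adjoint_inner_left _ _ _

lemma sliceR_inner (a : H₁) (x : H) (d : H₂) : ⟪sliceR T a x, d⟫ = ⟪x, T a d⟫ :=
  ContinuousLinearMap.adjoint_inner_left _ _ _

variable (hinner : ∀ (a c : H₁) (b d : H₂), ⟪T a b, T c d⟫ = ⟪a, c⟫ * ⟪b, d⟫)

include hinner

lemma sliceL_apply (y : H₂) (a : H₁) (b : H₂) : sliceL T y (T a b) = ⟪b, y⟫ • a := by
  apply ext_inner_right ℝ
  intro c
  rw [sliceL_inner, hinner, real_inner_smul_left]
  ring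

lemma sliceR_apply (a c : H₁) (d : H₂) : sliceR T a (T c d) = ⟪c, a⟫ • d := by
  apply ext_inner_right ℝ
  intro b
  rw [sliceR_inner, hinner, real_inner_smul_left]

lemma sliceL_mem {K₁ : Submodule ℝ H₁} {K₂ : Submodule ℝ H₂} (hK₁ : IsClosed (K₁ : Set H₁))
    {x : H} (hx : x ∈ tensorSub T K₁ K₂) (y : H₂) : sliceL T y x ∈ K₁ := by
  have hle : tensorSub T K₁ K₂ ≤ K₁.comap (sliceL T y).toLinearMap := by
    refine closure_span_le (hK₁.preimage (sliceL T y).continuous) ?_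
    rintro z ⟨a, ha, b, hb, rfl⟩
    show sliceL T y (T a b) ∈ K₁
    rw [sliceL_apply T hinner]
    exact K₁.smul_mem _ ha
  exact hle hx

lemma sliceR_mem {K₁ : Submodule ℝ H₁} {K₂ : Submodule ℝ H₂} (hK₂ : IsClosed (K₂ : Set H₂))
    {x : H} (hx : x ∈ tensorSub T K₁ K₂) (a : H₁) : sliceR T a x ∈ K₂ := by
  have hle : tensorSub T K₁ K₂ ≤ K₂.comap (sliceR T a).toLinearMap := by
    refine closure_span_le (hK₂.preimage (sliceR T a).continuous) ?_
    rintro z ⟨c, hc, d, hd, rfl⟩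
    show sliceR T a (T c d) ∈ K₂
    rw [sliceR_apply T hinner]
    exact K₂.smul_mem _ hd
  exact hle hx

lemma tensorSub_mono {K₁ K₁' : Submodule ℝ H₁} {K₂ K₂' : Submodule ℝ H₂}
    (h1 : K₁ ≤ K₁') (h2 : K₂ ≤ K₂') : tensorSub T K₁ K₂ ≤ tensorSub T K₁' K₂' :=
  Submodule.topologicalClosure_mono (Submodule.span_mono (by
    rintro z ⟨a, ha, b, hb, rfl⟩
    exact ⟨a, h1 ha, b, h2 hb, rfl⟩))

include hinner in
lemma mem_tensorSub_of_slices
    (hdense : (Submodule.span ℝ {z : H | ∃ a b, z = T a b}).topologicalClosure = ⊤)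
    {K₁ : Submodule ℝ H₁} {K₂ : Submodule ℝ H₂}
    (hK₁ : IsClosed (K₁ : Set H₁)) (hK₂ : IsClosed (K₂ : Set H₂)) {x : H}
    (hL : ∀ y, sliceL T y x ∈ K₁) (hR : ∀ a, sliceR T a x ∈ K₂) :
    x ∈ tensorSub T K₁ K₂ := by
  set s : Set H := {z : H | (∃ c ∈ K₁ᗮ, ∃ d, z = T c d) ∨ (∃ c, ∃ d ∈ K₂ᗮ, z = T c d)} with hs
  set W : Submodule ℝ H := (Submodule.span ℝ s).topologicalClosure with hWdef
  set V : Submodule ℝ H := tensorSub T K₁ K₂ with hVdef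
  haveI : CompleteSpace K₁ := hK₁.completeSpace_coe
  haveI : CompleteSpace K₂ := hK₂.completeSpace_coe
  haveI : CompleteSpace V := (Submodule.isClosed_topologicalClosure _).completeSpace_coe
  -- elementary tensors from K₁, K₂ are orthogonal to the generators of W
  have hgen : ∀ a ∈ K₁, ∀ b ∈ K₂, ∀ z ∈ s, ⟪T a b, z⟫ = 0 := by
    rintro a ha b hb z (⟨c, hc, d, rfl⟩ | ⟨c, d, hd, rfl⟩)
    · rw [hinner, (Submodule.mem_orthogonal _ _).mp hc a ha, zero_mul]
    · rw [hinner, (Submodule.mem_orthogonal _ _).mp hd b hb, mul_zero]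
  -- V is orthogonal to W
  have hVW : V ≤ Wᗮ := by
    refine closure_span_le (Submodule.isClosed_orthogonal _) ?_
    rintro z ⟨a, ha, b, hb, rfl⟩
    exact mem_closure_span_orthogonal (fun w hw => hgen a ha b hb w hw)
  -- x is orthogonal to W
  have hxW : x ∈ Wᗮ := by
    refine mem_closure_span_orthogonal ?_
    rintro z (⟨c, hc, d, rfl⟩ | ⟨c, d, hd, rfl⟩)
    · rw [← sliceL_inner T d x c]
      exact (Submodule.mem_orthogonal _ _).mp hc _ (hL d)
    · rw [← sliceR_inner T c x d]
      exact (Submodule.mem_orthogonal _ _).mp hd _ (hR c)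
  -- V ⊔ W is dense
  have hsup : (V ⊔ W).topologicalClosure = ⊤ := by
    rw [← top_le_iff, ← hdense]
    refine Submodule.topologicalClosure_minimal _ (Submodule.span_le.mpr ?_)
      (Submodule.isClosed_topologicalClosure _)
    rintro z ⟨a, b, rfl⟩
    refine Submodule.le_topologicalClosure _ ?_
    set a' : H₁ := (Submodule.orthogonalProjectionOnto K₁ a : H₁) with ha'
    set b' : H₂ := (Submodule.orthogonalProjectionOnto K₂ b : H₂) with hb'
    have e1 : T a b = T a' b' + T a' (b - b') + T (a - a') b := by
      have u1 : a' + (a - a') = a := by abel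
      have u2 : b' + (b - b') = b := by abel
      calc T a b = T (a' + (a - a')) b := by rw [u1]
        _ = T a' b + T (a - a') b := by rw [map_add, ContinuousLinearMap.add_apply]
        _ = T a' (b' + (b - b')) + T (a - a') b := by rw [u2]
        _ = T a' b' + T a' (b - b') + T (a - a') b := by rw [map_add, add_assoc]
    rw [e1]
    refine Submodule.add_mem _ (Submodule.add_mem _ ?_ ?_) ?_
    · exact Submodule.mem_sup_left (Submodule.le_topologicalClosure _
        (Submodule.subset_span ⟨a', (Submodule.orthogonalProjectionOnto K₁ a).2, b',
          (Submodule.orthogonalProjectionOnto K₂ b).2, rfl⟩))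
    · exact Submodule.mem_sup_right (Submodule.le_topologicalClosure _
        (Submodule.subset_span (Or.inr ⟨a', b - b',
          Submodule.sub_starProjection_mem_orthogonal (K := K₂) b, rfl⟩)))
    · exact Submodule.mem_sup_right (Submodule.le_topologicalClosure _
        (Submodule.subset_span (Or.inl ⟨a - a',
          Submodule.sub_starProjection_mem_orthogonal (K := K₁) a, b, rfl⟩)))
  -- decompose x along V
  obtain ⟨v, hv, w, hw, rfl⟩ := V.exists_add_mem_mem_orthogonal x
  have hwW : w ∈ Wᗮ := by
    have : (v + w) - v ∈ Wᗮ := Submodule.sub_mem _ hxW (hVW hv)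
    simpa using this
  have hw2 : ∀ u ∈ V ⊔ W, ⟪w, u⟫ = 0 := by
    intro u hu
    rcases Submodule.mem_sup.mp hu with ⟨p, hp, q, hq, rfl⟩
    rw [real_inner_comm, inner_add_left, (Submodule.mem_orthogonal _ _).mp hw p hp,
      (Submodule.mem_orthogonal _ _).mp hwW q hq, add_zero]
  have hw3 : w ∈ ((Submodule.span ℝ ((V ⊔ W : Submodule ℝ H) : Set H)).topologicalClosure)ᗮ :=
    mem_closure_span_orthogonal hw2
  rw [Submodule.span_eq, hsup, Submodule.top_orthogonal_eq_bot, Submodule.mem_bot] at hw3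
  rw [hw3, add_zero]
  exact hv

end Stmt5Aux

/-- If `H` is (isomorphic to) the Hilbert tensor product `H₁ ⊗ H₂` — witnessed by a bilinear
map `T` with `⟪T a b, T c d⟫ = ⟪a,c⟫⟪b,d⟫` whose elementary tensors span a dense subspace —
then for arbitrary closed subspaces,
`(H₁ₐ ⊗ H₂ₐ) ∩ (H₁ᵦ ⊗ H₂ᵦ) = (H₁ₐ ∩ H₁ᵦ) ⊗ (H₂ₐ ∩ H₂ᵦ)`. -/
theorem stmt5 (T : H₁ →L[ℝ] H₂ →L[ℝ] H)
    (hinner : ∀ (a c : H₁) (b d : H₂), ⟪T a b, T c d⟫ = ⟪a, c⟫ * ⟪b, d⟫)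
    (hdense : (Submodule.span ℝ {z : H | ∃ a b, z = T a b}).topologicalClosure = ⊤)
    (K₁a K₁b : Submodule ℝ H₁) (K₂a K₂b : Submodule ℝ H₂)
    (h₁a : IsClosed (K₁a : Set H₁)) (h₁b : IsClosed (K₁b : Set H₁))
    (h₂a : IsClosed (K₂a : Set H₂)) (h₂b : IsClosed (K₂b : Set H₂)) :
    tensorSub T K₁a K₂a ⊓ tensorSub T K₁b K₂b = tensorSub T (K₁a ⊓ K₁b) (K₂a ⊓ K₂b) := by
  apply le_antisymm
  · intro x hx
    obtain ⟨hxa, hxb⟩ := Submodule.mem_inf.mp hx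
    refine Stmt5Aux.mem_tensorSub_of_slices T hinner hdense
      (by rw [Submodule.coe_inf]; exact h₁a.inter h₁b)
      (by rw [Submodule.coe_inf]; exact h₂a.inter h₂b) ?_ ?_
    · exact fun y => Submodule.mem_inf.mpr
        ⟨Stmt5Aux.sliceL_mem T hinner h₁a hxa y, Stmt5Aux.sliceL_mem T hinner h₁b hxb y⟩
    · exact fun a => Submodule.mem_inf.mpr
        ⟨Stmt5Aux.sliceR_mem T hinner h₂a hxa a, Stmt5Aux.sliceR_mem T hinner h₂b hxb a⟩
  · exact le_inf (Stmt5Aux.tensorSub_mono T hinner inf_le_left inf_le_left)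
      (Stmt5Aux.tensorSub_mono T hinner inf_le_right inf_le_right)
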